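/- arXiv:0911.4896 — 2 statements merged into one kernel-verified Lean document; each statement's English description precedes it below -/
import Mathlib

section
/- Fix ν ∈ ℕ and let h = (h_0, …, h_ν) be i.i.d. standard complex Gaussian random variables. For a block length L ≥ ν+1 define λ_k = Σ_{i=0}^{ν} h_i exp(−2π√−1 · i(k−1)/L), k = 1, …, L. Then for every rate R > 0 the zero-forcing SC-FDE outage probability P_out(s) = P[ Σ_{k=1}^{L} 1/(s·|λ_k|²) > L/(2^R − 1) ] satisfies lim_{s→∞} log P_out(s)/log s = −1; in particular the diversity order of ZF SC-FDE equals 1 regardless of the channel memory length ν, the block length L, and the rate R. (Paper's Theorem 3 for the outage probability.) -/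
open MeasureTheory ProbabilityTheory Filter
open Real
open scoped NNReal ENNReal

/-- The law of a standard complex Gaussian random variable: real and imaginary
parts are independent real Gaussians with mean `0` and variance `1/2`. -/
noncomputable def stdComplexGaussian : Measure ℂ :=
  ((gaussianReal 0 (1/2)).prod (gaussianReal 0 (1/2))).map
    (fun p : ℝ × ℝ => (p.1 : ℂ) + (p.2 : ℂ) * Complex.I)

lemma gaussianPDF_half (x : ℝ) :
    gaussianPDF 0 (1/2) x = ENNReal.ofReal ((Real.sqrt π)⁻¹ * Real.exp (-(x^2))) := by
  rw [gaussianPDF, gaussianPDFReal]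
  norm_num
  congr 1
  have h2 : (Real.sqrt 2 : ℝ) ≠ 0 := by positivity
  field_simp
  rw [mul_comm, mul_assoc, ENNReal.inv_mul_cancel (by simp) ENNReal.ofReal_ne_top, mul_one]

lemma prod_gauss_eq :
    ((gaussianReal 0 (1/2)).prod (gaussianReal 0 (1/2))) =
      (volume : Measure (ℝ × ℝ)).withDensity
        (fun p => gaussianPDF 0 (1/2) p.1 * gaussianPDF 0 (1/2) p.2) := by
  have hv : ((1/2 : ℝ≥0)) ≠ 0 := by norm_num
  refine Measure.prod_eq fun s t hs ht => ?_
  rw [withDensity_apply _ (hs.prod ht), Measure.volume_eq_prod, ← Measure.prod_restrict,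
    lintegral_prod_mul (measurable_gaussianPDF _ _).aemeasurable
      (measurable_gaussianPDF _ _).aemeasurable,
    gaussianReal_apply _ hv s, gaussianReal_apply _ hv t]

noncomputable def cgDens (z : ℂ) : ℝ≥0∞ :=
  ENNReal.ofReal (π⁻¹ * Real.exp (-(‖z‖ ^ 2)))

lemma measurable_cgDens : Measurable cgDens := by
  exact Measurable.ennreal_ofReal <|
    measurable_const.mul <| Real.measurable_exp.comp <|
      (continuous_norm.measurable.pow_const 2).neg

lemma stdComplexGaussian_eq :
    stdComplexGaussian = (volume : Measure ℂ).withDensity cgDens := by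
  have hfun : (fun p : ℝ × ℝ => (p.1 : ℂ) + (p.2 : ℂ) * Complex.I) =
      ⇑Complex.measurableEquivRealProd.symm := by
    funext p
    rw [Complex.measurableEquivRealProd_symm_apply, Complex.mk_eq_add_mul_I]
  have hvol : (volume : Measure ℂ) =
      Measure.map Complex.measurableEquivRealProd.symm (volume : Measure (ℝ × ℝ)) :=
    (Complex.volume_preserving_equiv_real_prod.symm _).map_eq.symm
  ext S hS
  rw [stdComplexGaussian, hfun, prod_gauss_eq,
    Measure.map_apply Complex.measurableEquivRealProd.symm.measurable hS,
    withDensity_apply _ (hS.preimage Complex.measurableEquivRealProd.symm.measurable),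
    withDensity_apply _ hS, hvol,
    setLIntegral_map hS measurable_cgDens Complex.measurableEquivRealProd.symm.measurable]
  refine setLIntegral_congr_fun (hS.preimage Complex.measurableEquivRealProd.symm.measurable)
    (fun p _ => ?_)
  rw [gaussianPDF_half, gaussianPDF_half, ← ENNReal.ofReal_mul (by positivity)]
  unfold cgDens
  congr 1
  rw [Complex.measurableEquivRealProd_symm_apply, Complex.mk_eq_add_mul_I,
    Complex.sq_norm, Complex.normSq_add_mul_I]
  rw [show (√π)⁻¹ * Real.exp (-p.1 ^ 2) * ((√π)⁻¹ * Real.exp (-p.2 ^ 2))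
      = ((√π)⁻¹*(√π)⁻¹) * Real.exp (-p.1^2 + -p.2^2) by rw [Real.exp_add]; ring,
    ← mul_inv, Real.mul_self_sqrt Real.pi_pos.le]
  ring_nf

instance : IsProbabilityMeasure stdComplexGaussian := by
  unfold stdComplexGaussian
  exact Measure.isProbabilityMeasure_map
    (Measurable.aemeasurable (by fun_prop))

lemma pi_cancel : ENNReal.ofReal π⁻¹ * (NNReal.pi : ℝ≥0∞) = 1 := by
  rw [← ENNReal.ofReal_coe_nnreal, NNReal.coe_real_pi,
    ← ENNReal.ofReal_mul (by positivity), inv_mul_cancel₀ Real.pi_ne_zero,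
    ENNReal.ofReal_one]

lemma stdComplexGaussian_closedBall_le (c : ℂ) {r : ℝ} (hr : 0 ≤ r) :
    stdComplexGaussian (Metric.closedBall c r) ≤ ENNReal.ofReal (r ^ 2) := by
  rw [stdComplexGaussian_eq, withDensity_apply _ measurableSet_closedBall]
  calc ∫⁻ z in Metric.closedBall c r, cgDens z
      ≤ ∫⁻ _ in Metric.closedBall c r, ENNReal.ofReal π⁻¹ := by
        refine setLIntegral_mono measurable_const fun z _ => ?_
        refine ENNReal.ofReal_le_ofReal ?_
        calc π⁻¹ * Real.exp (-(‖z‖ ^ 2)) ≤ π⁻¹ * 1 :=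
              mul_le_mul_of_nonneg_left
                (Real.exp_le_one_iff.2 (neg_nonpos.2 (by positivity))) (by positivity)
          _ = π⁻¹ := mul_one _
    _ = ENNReal.ofReal π⁻¹ * volume (Metric.closedBall c r) := setLIntegral_const _ _
    _ = ENNReal.ofReal π⁻¹ * (ENNReal.ofReal r ^ 2 * NNReal.pi) := by
        rw [Complex.volume_closedBall]
    _ = (ENNReal.ofReal π⁻¹ * NNReal.pi) * ENNReal.ofReal r ^ 2 := by ring
    _ = ENNReal.ofReal (r ^ 2) := by rw [pi_cancel, one_mul, ENNReal.ofReal_pow hr]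

lemma stdComplexGaussian_closedBall_ge (c : ℂ) {r : ℝ} (hr : 0 ≤ r) :
    ENNReal.ofReal (Real.exp (-(‖c‖ + r) ^ 2) * r ^ 2) ≤
      stdComplexGaussian (Metric.closedBall c r) := by
  rw [stdComplexGaussian_eq, withDensity_apply _ measurableSet_closedBall]
  calc ENNReal.ofReal (Real.exp (-(‖c‖ + r) ^ 2) * r ^ 2)
      = ENNReal.ofReal (π⁻¹ * Real.exp (-(‖c‖ + r) ^ 2)) *
          volume (Metric.closedBall c r) := by
        rw [Complex.volume_closedBall]
        rw [show ENNReal.ofReal (π⁻¹ * Real.exp (-(‖c‖ + r) ^ 2)) *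
            (ENNReal.ofReal r ^ 2 * NNReal.pi)
            = (ENNReal.ofReal π⁻¹ * NNReal.pi) *
              (ENNReal.ofReal (Real.exp (-(‖c‖ + r) ^ 2)) * ENNReal.ofReal r ^ 2) by
          rw [ENNReal.ofReal_mul (by positivity)]; ring]
        rw [pi_cancel, one_mul, ← ENNReal.ofReal_pow hr,
          ← ENNReal.ofReal_mul (by positivity)]
    _ = ∫⁻ _ in Metric.closedBall c r,
          ENNReal.ofReal (π⁻¹ * Real.exp (-(‖c‖ + r) ^ 2)) :=
        (setLIntegral_const _ _).symm
    _ ≤ ∫⁻ z in Metric.closedBall c r, cgDens z := by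
        refine setLIntegral_mono measurable_cgDens fun z hz => ?_
        refine ENNReal.ofReal_le_ofReal ?_
        refine mul_le_mul_of_nonneg_left (Real.exp_le_exp.2 ?_) (by positivity)
        rw [neg_le_neg_iff]
        have hz' : ‖z‖ ≤ ‖c‖ + r := by
          have := Metric.mem_closedBall.1 hz
          calc ‖z‖ = dist z 0 := by simp [Complex.dist_eq]
            _ ≤ dist z c + dist c 0 := dist_triangle _ _ _
            _ ≤ r + ‖c‖ := by simp [Complex.dist_eq] at this ⊢; linarith
            _ = ‖c‖ + r := add_comm _ _
        exact pow_le_pow_left₀ (norm_nonneg z) hz' 2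

lemma pi_apply_slice {n : ℕ} (E : Set (Fin (n + 1) → ℂ)) (hE : MeasurableSet E) :
    Measure.pi (fun _ : Fin (n + 1) => stdComplexGaussian) E
      = ∫⁻ t, stdComplexGaussian {x : ℂ | Fin.cons x t ∈ E}
          ∂(Measure.pi (fun _ : Fin n => stdComplexGaussian)) := by
  have hmp := measurePreserving_piFinSuccAbove (fun _ : Fin (n + 1) => stdComplexGaussian) 0
  set e := MeasurableEquiv.piFinSuccAbove (fun _ : Fin (n + 1) => ℂ) 0 with he
  have hsymm : ∀ (x : ℂ) (t : Fin n → ℂ), e.symm (x, t) = Fin.cons x t := by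
    intro x t
    show (Fin.insertNthEquiv (fun _ : Fin (n + 1) => ℂ) 0) (x, t) = Fin.cons x t
    simp [Fin.insertNthEquiv, Fin.insertNth_zero']
  have h1 : Measure.pi (fun _ : Fin (n + 1) => stdComplexGaussian) E
      = (stdComplexGaussian.prod (Measure.pi fun _ : Fin n => stdComplexGaussian))
          (e.symm ⁻¹' E) := by
    rw [← hmp.map_eq, MeasurableEquiv.map_apply]
    congr 1
    ext h
    simp
  rw [h1, Measure.prod_apply_symm (e.symm.measurable hE)]
  congr 1
  funext t
  congr 1
  ext x
  simp [hsymm]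


/-- The `L`-point DFT values of the (zero-padded) channel taps `h = (h_0, …, h_ν)`:
`λ_k = ∑_{i=0}^{ν} h_i exp(-2π√-1 · i k / L)` (with `k = 0, …, L-1`
corresponding to the paper's `k - 1`). -/
noncomputable def dftVal (ν L : ℕ) (h : Fin (ν + 1) → ℂ) (k : Fin L) : ℂ :=
  ∑ i : Fin (ν + 1),
    h i * Complex.exp (-(2 * (Real.pi : ℂ) * Complex.I) * (i.val : ℂ) * (k.val : ℂ) / (L : ℂ))

lemma measurable_dftVal (ν L : ℕ) (k : Fin L) : Measurable (fun h => dftVal ν L h k) :=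
  Finset.measurable_sum _ fun i _ => (measurable_pi_apply i).mul_const _

lemma measurableSet_event (ν L : ℕ) (k : Fin L) (r : ℝ) :
    MeasurableSet {h : Fin (ν + 1) → ℂ | ‖dftVal ν L h k‖ ≤ r} :=
  (continuous_norm.measurable.comp (measurable_dftVal ν L k)) measurableSet_Iic

lemma dftVal_cons (ν L : ℕ) (x : ℂ) (t : Fin ν → ℂ) (k : Fin L) :
    dftVal ν L (Fin.cons x t) k = x + ∑ j : Fin ν, t j *
      Complex.exp (-(2 * (Real.pi : ℂ) * Complex.I) * ((j.succ : Fin (ν + 1)).val : ℂ)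
        * (k.val : ℂ) / (L : ℂ)) := by
  rw [dftVal, Fin.sum_univ_succ]
  simp

lemma slice_event_eq (ν L : ℕ) (k : Fin L) (r : ℝ) (t : Fin ν → ℂ) :
    {x : ℂ | Fin.cons x t ∈ {h : Fin (ν + 1) → ℂ | ‖dftVal ν L h k‖ ≤ r}}
      = Metric.closedBall (-(∑ j : Fin ν, t j *
          Complex.exp (-(2 * (Real.pi : ℂ) * Complex.I) * ((j.succ : Fin (ν + 1)).val : ℂ)
            * (k.val : ℂ) / (L : ℂ)))) r := by
  ext x
  simp only [Set.mem_setOf_eq, Metric.mem_closedBall, dftVal_cons, Complex.dist_eq,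
    sub_neg_eq_add]

lemma meas_event_le (ν L : ℕ) (k : Fin L) {r : ℝ} (hr : 0 ≤ r) :
    Measure.pi (fun _ : Fin (ν + 1) => stdComplexGaussian)
      {h : Fin (ν + 1) → ℂ | ‖dftVal ν L h k‖ ≤ r} ≤ ENNReal.ofReal (r ^ 2) := by
  rw [pi_apply_slice _ (measurableSet_event ν L k r)]
  calc ∫⁻ t, stdComplexGaussian
        {x : ℂ | Fin.cons x t ∈ {h : Fin (ν + 1) → ℂ | ‖dftVal ν L h k‖ ≤ r}}
        ∂(Measure.pi (fun _ : Fin ν => stdComplexGaussian))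
      ≤ ∫⁻ _, ENNReal.ofReal (r ^ 2)
          ∂(Measure.pi (fun _ : Fin ν => stdComplexGaussian)) := by
        refine lintegral_mono fun t => ?_
        rw [slice_event_eq]
        exact stdComplexGaussian_closedBall_le _ hr
    _ = ENNReal.ofReal (r ^ 2) := by rw [lintegral_const, measure_univ, mul_one]

lemma meas_event_ge (ν L : ℕ) (hL : 0 < L) {r : ℝ} (hr0 : 0 ≤ r) (hr1 : r ≤ 1) :
    ENNReal.ofReal ((Real.exp (-((ν : ℝ) + 1) ^ 2) * Real.exp (-(ν : ℝ))) * r ^ 2) ≤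
      Measure.pi (fun _ : Fin (ν + 1) => stdComplexGaussian)
        {h : Fin (ν + 1) → ℂ | ‖dftVal ν L h ⟨0, hL⟩‖ ≤ r} := by
  set k0 : Fin L := ⟨0, hL⟩
  set A : Set (Fin ν → ℂ) := Set.pi Set.univ (fun _ => Metric.closedBall (0 : ℂ) 1) with hA
  have hAmeas : MeasurableSet A := MeasurableSet.univ_pi fun _ => measurableSet_closedBall
  set c0 : ℝ≥0∞ := ENNReal.ofReal (Real.exp (-((ν : ℝ) + 1) ^ 2) * r ^ 2) with hc0
  rw [pi_apply_slice _ (measurableSet_event ν L k0 r)]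
  have key : ∀ t ∈ A, c0 ≤ stdComplexGaussian
      {x : ℂ | Fin.cons x t ∈ {h : Fin (ν + 1) → ℂ | ‖dftVal ν L h k0‖ ≤ r}} := by
    intro t ht
    rw [slice_event_eq]
    set z : ℂ := ∑ j : Fin ν, t j *
      Complex.exp (-(2 * (Real.pi : ℂ) * Complex.I) * ((j.succ : Fin (ν + 1)).val : ℂ)
        * ((k0.val : ℕ) : ℂ) / (L : ℂ)) with hz
    have hzabs : ‖-z‖ ≤ (ν : ℝ) := by
      rw [norm_neg]
      calc ‖z‖ ≤ ∑ j : Fin ν, ‖t j *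
            Complex.exp (-(2 * (Real.pi : ℂ) * Complex.I) * ((j.succ : Fin (ν + 1)).val : ℂ)
              * ((k0.val : ℕ) : ℂ) / (L : ℂ))‖ := norm_sum_le _ _
        _ ≤ ∑ _j : Fin ν, 1 := by
            refine Finset.sum_le_sum fun j _ => ?_
            rw [norm_mul]
            have h1 : ‖t j‖ ≤ 1 := by
              have := ht j (Set.mem_univ j)
              simpa [Complex.dist_eq] using this
            have h2 : ‖Complex.exp (-(2 * (Real.pi : ℂ) * Complex.I)
                * ((j.succ : Fin (ν + 1)).val : ℂ) * ((k0.val : ℕ) : ℂ) / (L : ℂ))‖ ≤ 1 := by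
              have : ((k0.val : ℕ) : ℂ) = 0 := by simp [k0]
              rw [this]
              simp
            calc ‖t j‖ * _ ≤ 1 * 1 := by
                  exact mul_le_mul h1 h2 (norm_nonneg _) zero_le_one
              _ = 1 := one_mul 1
        _ = (ν : ℝ) := by simp
    calc c0 ≤ ENNReal.ofReal (Real.exp (-(‖-z‖ + r) ^ 2) * r ^ 2) := by
          refine ENNReal.ofReal_le_ofReal ?_
          refine mul_le_mul_of_nonneg_right (Real.exp_le_exp.2 ?_) (by positivity)
          rw [neg_le_neg_iff]
          refine pow_le_pow_left₀ (by positivity) ?_ 2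
          linarith
      _ ≤ stdComplexGaussian (Metric.closedBall (-z) r) :=
          stdComplexGaussian_closedBall_ge _ hr0
  calc ENNReal.ofReal ((Real.exp (-((ν : ℝ) + 1) ^ 2) * Real.exp (-(ν : ℝ))) * r ^ 2)
      = c0 * ENNReal.ofReal (Real.exp (-(ν : ℝ))) := by
        rw [hc0, ← ENNReal.ofReal_mul (by positivity)]
        ring_nf
    _ ≤ c0 * Measure.pi (fun _ : Fin ν => stdComplexGaussian) A := by
        refine mul_le_mul_right ?_ c0
        rw [hA, Measure.pi_pi]
        calc ENNReal.ofReal (Real.exp (-(ν : ℝ)))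
            = ENNReal.ofReal (Real.exp (-1) ^ ν) := by
              rw [← Real.exp_nat_mul]
              norm_num
          _ = ENNReal.ofReal (Real.exp (-1)) ^ ν := ENNReal.ofReal_pow (by positivity) ν
          _ ≤ stdComplexGaussian (Metric.closedBall (0 : ℂ) 1) ^ ν := by
              refine pow_le_pow_left' ?_ ν
              have := stdComplexGaussian_closedBall_ge (0 : ℂ) (r := 1) zero_le_one
              simpa using this
          _ = ∏ _j : Fin ν, stdComplexGaussian (Metric.closedBall (0 : ℂ) 1) := by
              rw [Finset.prod_const]
              simp
    _ = ∫⁻ t in A, c0 ∂(Measure.pi (fun _ : Fin ν => stdComplexGaussian)) := by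
        rw [setLIntegral_const]
    _ ≤ ∫⁻ t in A, stdComplexGaussian
          {x : ℂ | Fin.cons x t ∈ {h : Fin (ν + 1) → ℂ | ‖dftVal ν L h k0‖ ≤ r}}
          ∂(Measure.pi (fun _ : Fin ν => stdComplexGaussian)) :=
        setLIntegral_mono' hAmeas key
    _ ≤ ∫⁻ t, stdComplexGaussian
          {x : ℂ | Fin.cons x t ∈ {h : Fin (ν + 1) → ℂ | ‖dftVal ν L h k0‖ ≤ r}}
          ∂(Measure.pi (fun _ : Fin ν => stdComplexGaussian)) :=
        setLIntegral_le_lintegral _ _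

lemma event_subset_union (ν L : ℕ) (s c : ℝ) (hs : 0 < s) (hc : 0 < c) :
    {h : Fin (ν + 1) → ℂ |
        ¬ ((∀ k : Fin L, dftVal ν L h k ≠ 0) ∧
          ∑ k : Fin L, 1 / (s * ‖dftVal ν L h k‖ ^ 2) ≤ (L : ℝ) / c)}
      ⊆ ⋃ k : Fin L, {h | ‖dftVal ν L h k‖ ≤ Real.sqrt (c / s)} := by
  intro h hh
  simp only [Set.mem_setOf_eq, not_and_or] at hh
  rcases hh with hA | hB
  · push_neg at hA
    obtain ⟨k, hk⟩ := hA
    exact Set.mem_iUnion.2 ⟨k, by simp [hk, Real.sqrt_nonneg]⟩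
  · push_neg at hB
    have hex : ∃ k : Fin L, 1 / c < 1 / (s * ‖dftVal ν L h k‖ ^ 2) := by
      by_contra hcon
      push_neg at hcon
      have : ∑ k : Fin L, 1 / (s * ‖dftVal ν L h k‖ ^ 2)
          ≤ ∑ _k : Fin L, 1 / c := Finset.sum_le_sum fun k _ => hcon k
      rw [Finset.sum_const, Finset.card_univ, Fintype.card_fin, nsmul_eq_mul] at this
      rw [mul_one_div] at this
      exact absurd (this.trans_lt hB) (lt_irrefl _)
    obtain ⟨k, hk⟩ := hex
    have hpos : 0 < s * ‖dftVal ν L h k‖ ^ 2 := by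
      by_contra hnp
      push_neg at hnp
      have : 1 / (s * ‖dftVal ν L h k‖ ^ 2) ≤ 0 :=
        one_div_nonpos.2 hnp
      have h0 : (0:ℝ) < 1 / c := by positivity
      linarith
    have hlt : s * ‖dftVal ν L h k‖ ^ 2 < c :=
      (one_div_lt_one_div hc hpos).1 hk
    have habs2 : ‖dftVal ν L h k‖ ^ 2 ≤ c / s := by
      rw [le_div_iff₀ hs]
      linarith [mul_comm s (‖dftVal ν L h k‖ ^ 2)]
    refine Set.mem_iUnion.2 ⟨k, ?_⟩
    simp only [Set.mem_setOf_eq]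
    exact (Real.le_sqrt (norm_nonneg _) (by positivity)).2 habs2

lemma subset_event (ν L : ℕ) (hL : 0 < L) (s c : ℝ) (hs : 0 < s) (hc : 0 < c) :
    {h : Fin (ν + 1) → ℂ |
        ‖dftVal ν L h ⟨0, hL⟩‖ ≤ Real.sqrt ((c / (2 * L)) / s)}
      ⊆ {h : Fin (ν + 1) → ℂ |
        ¬ ((∀ k : Fin L, dftVal ν L h k ≠ 0) ∧
          ∑ k : Fin L, 1 / (s * ‖dftVal ν L h k‖ ^ 2) ≤ (L : ℝ) / c)} := by
  intro h hm
  simp only [Set.mem_setOf_eq] at hm ⊢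
  rintro ⟨hA, hB⟩
  have hLpos : (0:ℝ) < L := Nat.cast_pos.2 hL
  have hne := hA ⟨0, hL⟩
  have habs : 0 < ‖dftVal ν L h ⟨0, hL⟩‖ := by
    simpa [norm_pos_iff] using hne
  have h2 : ‖dftVal ν L h ⟨0, hL⟩‖ ^ 2 ≤ (c / (2 * L)) / s := by
    rw [← Real.sq_sqrt (show (0:ℝ) ≤ (c / (2 * L)) / s by positivity)]
    exact pow_le_pow_left₀ habs.le hm 2
  have hterm : 2 * L / c ≤ 1 / (s * ‖dftVal ν L h ⟨0, hL⟩‖ ^ 2) := by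
    have hds : s * ‖dftVal ν L h ⟨0, hL⟩‖ ^ 2 ≤ c / (2 * L) := by
      rw [mul_comm]
      rw [div_div] at h2
      exact (le_div_iff₀ hs).1 (by rw [div_div]; exact h2)
    have hpos : 0 < s * ‖dftVal ν L h ⟨0, hL⟩‖ ^ 2 := by positivity
    calc (2 * L : ℝ) / c = 1 / (c / (2 * L)) := by
          rw [one_div_div]
      _ ≤ 1 / (s * ‖dftVal ν L h ⟨0, hL⟩‖ ^ 2) :=
          one_div_le_one_div_of_le hpos hds
  have hsum : 2 * L / c ≤ ∑ k : Fin L, 1 / (s * ‖dftVal ν L h k‖ ^ 2) := by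
    refine hterm.trans ?_
    refine Finset.single_le_sum (f := fun k : Fin L =>
      1 / (s * ‖dftVal ν L h k‖ ^ 2)) (fun k _ => by positivity)
      (Finset.mem_univ _)
  have : (2 : ℝ) * L / c ≤ L / c := hsum.trans hB
  rw [div_le_div_iff₀ (by positivity) hc] at this
  nlinarith

lemma final_bounds (ν L : ℕ) (hL : ν + 1 ≤ L) (c : ℝ) (hc : 0 < c) :
    ∃ a b : ℝ, 0 < a ∧ 0 < b ∧ ∀ s : ℝ, max (c / (2 * L)) 2 ≤ s →
      a / s ≤ (Measure.pi (fun _ : Fin (ν + 1) => stdComplexGaussian)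
          {h : Fin (ν + 1) → ℂ |
            ¬ ((∀ k : Fin L, dftVal ν L h k ≠ 0) ∧
              ∑ k : Fin L, 1 / (s * ‖dftVal ν L h k‖ ^ 2) ≤
                (L : ℝ) / c)}).toReal ∧
      (Measure.pi (fun _ : Fin (ν + 1) => stdComplexGaussian)
          {h : Fin (ν + 1) → ℂ |
            ¬ ((∀ k : Fin L, dftVal ν L h k ≠ 0) ∧
              ∑ k : Fin L, 1 / (s * ‖dftVal ν L h k‖ ^ 2) ≤
                (L : ℝ) / c)}).toReal ≤ b / s := by
  have hL0 : 0 < L := lt_of_lt_of_le (Nat.succ_pos ν) hL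
  have hLR : (0:ℝ) < L := Nat.cast_pos.2 hL0
  set C : ℝ := Real.exp (-((ν : ℝ) + 1) ^ 2) * Real.exp (-(ν : ℝ)) with hCdef
  have hCpos : 0 < C := by positivity
  set δ : ℝ := c / (2 * L) with hδdef
  have hδpos : 0 < δ := by positivity
  refine ⟨C * δ, L * c, by positivity, by positivity, fun s hs => ?_⟩
  have hs2 : (2:ℝ) ≤ s := le_trans (le_max_right _ _) hs
  have hsδ : δ ≤ s := le_trans (le_max_left _ _) hs
  have hspos : (0:ℝ) < s := lt_of_lt_of_le two_pos hs2
  set E : Set (Fin (ν + 1) → ℂ) := {h : Fin (ν + 1) → ℂ |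
      ¬ ((∀ k : Fin L, dftVal ν L h k ≠ 0) ∧
        ∑ k : Fin L, 1 / (s * ‖dftVal ν L h k‖ ^ 2) ≤
          (L : ℝ) / c)} with hEdef
  have hEne : Measure.pi (fun _ : Fin (ν + 1) => stdComplexGaussian) E ≠ ⊤ :=
    measure_ne_top _ _
  constructor
  · -- lower bound
    set r : ℝ := Real.sqrt (δ / s) with hrdef
    have hr0 : 0 ≤ r := Real.sqrt_nonneg _
    have hr2 : r ^ 2 = δ / s := Real.sq_sqrt (by positivity)
    have hr1 : r ≤ 1 := by
      rw [hrdef, show (1:ℝ) = Real.sqrt 1 by rw [Real.sqrt_one]]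
      exact Real.sqrt_le_sqrt (by rw [div_le_one hspos]; exact hsδ)
    have h1 := meas_event_ge ν L hL0 hr0 hr1
    have h2 : Measure.pi (fun _ : Fin (ν + 1) => stdComplexGaussian)
        {h : Fin (ν + 1) → ℂ | ‖dftVal ν L h ⟨0, hL0⟩‖ ≤ r} ≤
        Measure.pi (fun _ : Fin (ν + 1) => stdComplexGaussian) E := by
      refine measure_mono ?_
      rw [hEdef]
      exact subset_event ν L hL0 s c hspos hc
    have h3 : ENNReal.ofReal (C * δ / s) ≤
        Measure.pi (fun _ : Fin (ν + 1) => stdComplexGaussian) E := by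
      refine le_trans ?_ (h1.trans h2)
      refine ENNReal.ofReal_le_ofReal ?_
      rw [hr2, hCdef]
      rw [mul_div_assoc]
    calc C * δ / s = (ENNReal.ofReal (C * δ / s)).toReal :=
          (ENNReal.toReal_ofReal (by positivity)).symm
      _ ≤ _ := ENNReal.toReal_mono hEne h3
  · -- upper bound
    have h1 : Measure.pi (fun _ : Fin (ν + 1) => stdComplexGaussian) E ≤
        ENNReal.ofReal ((L : ℝ) * c / s) := by
      calc Measure.pi (fun _ : Fin (ν + 1) => stdComplexGaussian) E
          ≤ Measure.pi (fun _ : Fin (ν + 1) => stdComplexGaussian)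
              (⋃ k : Fin L, {h | ‖dftVal ν L h k‖ ≤ Real.sqrt (c / s)}) :=
            measure_mono (by rw [hEdef]; exact event_subset_union ν L s c hspos hc)
        _ ≤ ∑ k : Fin L, Measure.pi (fun _ : Fin (ν + 1) => stdComplexGaussian)
              {h | ‖dftVal ν L h k‖ ≤ Real.sqrt (c / s)} :=
            measure_iUnion_fintype_le _ _
        _ ≤ ∑ _k : Fin L, ENNReal.ofReal (Real.sqrt (c / s) ^ 2) :=
            Finset.sum_le_sum fun k _ => meas_event_le ν L k (Real.sqrt_nonneg _)
        _ = ENNReal.ofReal ((L : ℝ) * c / s) := by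
            rw [Finset.sum_const, Finset.card_univ, Fintype.card_fin,
              Real.sq_sqrt (by positivity), nsmul_eq_mul,
              show ((L:ℕ):ℝ≥0∞) = ENNReal.ofReal ((L:ℕ):ℝ) by
                rw [ENNReal.ofReal_natCast],
              ← ENNReal.ofReal_mul (by positivity), mul_div_assoc]
    calc (Measure.pi (fun _ : Fin (ν + 1) => stdComplexGaussian) E).toReal
        ≤ (ENNReal.ofReal ((L : ℝ) * c / s)).toReal :=
          ENNReal.toReal_mono ENNReal.ofReal_ne_top h1
      _ = (L : ℝ) * c / s := ENNReal.toReal_ofReal (by positivity)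


/-- Paper's Theorem 3 (outage part): for zero-forcing SC-FDE, the outage
probability `P[∑_{k=1}^{L} 1/(s|λ_k|²) > L/(2^R - 1)]` has exponential order
`-1` in `s`, for every memory length `ν`, block length `L ≥ ν + 1` and rate
`R > 0`; i.e. the ZF diversity order is always `1`.  (On the null event where
some `λ_k = 0`, the summand is read as `+∞`, i.e. the outage event is the
complement of `{all λ_k ≠ 0 and ∑ 1/(s|λ_k|²) ≤ L/(2^R - 1)}`.) -/
theorem theorem3_zf_diversity_one (ν L : ℕ) (hL : ν + 1 ≤ L) (R : ℝ) (hR : 0 < R) :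
    Tendsto (fun s : ℝ =>
      Real.log ((Measure.pi (fun _ : Fin (ν + 1) => stdComplexGaussian)
          {h : Fin (ν + 1) → ℂ |
            ¬ ((∀ k : Fin L, dftVal ν L h k ≠ 0) ∧
              ∑ k : Fin L, 1 / (s * ‖dftVal ν L h k‖ ^ 2) ≤
                (L : ℝ) / ((2 : ℝ) ^ R - 1))}).toReal)
        / Real.log s)
      atTop (nhds (-1)) := by
  have hc : 0 < (2 : ℝ) ^ R - 1 := by
    have : (1:ℝ) < (2:ℝ) ^ R :=
      (Real.one_lt_rpow_iff_of_pos (by norm_num)).2 (Or.inl ⟨one_lt_two, hR⟩)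
    linarith
  obtain ⟨a, b, ha, hb, hab⟩ := final_bounds ν L hL ((2 : ℝ) ^ R - 1) hc
  have hlow : Tendsto (fun s : ℝ => Real.log a / Real.log s - 1) atTop (nhds (-1)) := by
    have := (tendsto_const_nhds (x := Real.log a) (f := atTop (α := ℝ))).div_atTop
      Real.tendsto_log_atTop
    have h2 := this.sub (tendsto_const_nhds (x := (1:ℝ)))
    simpa using h2
  have hup : Tendsto (fun s : ℝ => Real.log b / Real.log s - 1) atTop (nhds (-1)) := by
    have := (tendsto_const_nhds (x := Real.log b) (f := atTop (α := ℝ))).div_atTop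
      Real.tendsto_log_atTop
    have h2 := this.sub (tendsto_const_nhds (x := (1:ℝ)))
    simpa using h2
  refine tendsto_of_tendsto_of_tendsto_of_le_of_le' hlow hup ?_ ?_
  · filter_upwards [eventually_ge_atTop (max (((2:ℝ)^R - 1) / (2 * L)) 2)] with s hs
    obtain ⟨h1, _⟩ := hab s hs
    have hs2 : (2:ℝ) ≤ s := le_trans (le_max_right _ _) hs
    have hspos : (0:ℝ) < s := by linarith
    have hlogs : 0 < Real.log s := Real.log_pos (by linarith)
    have hPpos : 0 < (Measure.pi (fun _ : Fin (ν + 1) => stdComplexGaussian)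
        {h : Fin (ν + 1) → ℂ |
          ¬ ((∀ k : Fin L, dftVal ν L h k ≠ 0) ∧
            ∑ k : Fin L, 1 / (s * ‖dftVal ν L h k‖ ^ 2) ≤
              (L : ℝ) / ((2 : ℝ) ^ R - 1))}).toReal :=
      lt_of_lt_of_le (by positivity) h1
    have hlog1 : Real.log (a / s) ≤ Real.log (Measure.pi
        (fun _ : Fin (ν + 1) => stdComplexGaussian)
        {h : Fin (ν + 1) → ℂ |
          ¬ ((∀ k : Fin L, dftVal ν L h k ≠ 0) ∧
            ∑ k : Fin L, 1 / (s * ‖dftVal ν L h k‖ ^ 2) ≤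
              (L : ℝ) / ((2 : ℝ) ^ R - 1))}).toReal :=
      Real.log_le_log (by positivity) h1
    rw [Real.log_div ha.ne' hspos.ne'] at hlog1
    rw [show Real.log a / Real.log s - 1 = (Real.log a - Real.log s) / Real.log s by
      rw [sub_div, div_self hlogs.ne']]
    exact (div_le_div_iff_of_pos_right hlogs).2 hlog1
  · filter_upwards [eventually_ge_atTop (max (((2:ℝ)^R - 1) / (2 * L)) 2)] with s hs
    obtain ⟨h1, h2⟩ := hab s hs
    have hs2 : (2:ℝ) ≤ s := le_trans (le_max_right _ _) hs
    have hspos : (0:ℝ) < s := by linarith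
    have hlogs : 0 < Real.log s := Real.log_pos (by linarith)
    have hPpos : 0 < (Measure.pi (fun _ : Fin (ν + 1) => stdComplexGaussian)
        {h : Fin (ν + 1) → ℂ |
          ¬ ((∀ k : Fin L, dftVal ν L h k ≠ 0) ∧
            ∑ k : Fin L, 1 / (s * ‖dftVal ν L h k‖ ^ 2) ≤
              (L : ℝ) / ((2 : ℝ) ^ R - 1))}).toReal :=
      lt_of_lt_of_le (by positivity) h1
    have hlog2 : Real.log (Measure.pi
        (fun _ : Fin (ν + 1) => stdComplexGaussian)
        {h : Fin (ν + 1) → ℂ |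
          ¬ ((∀ k : Fin L, dftVal ν L h k ≠ 0) ∧
            ∑ k : Fin L, 1 / (s * ‖dftVal ν L h k‖ ^ 2) ≤
              (L : ℝ) / ((2 : ℝ) ^ R - 1))}).toReal ≤ Real.log (b / s) :=
      Real.log_le_log hPpos h2
    rw [Real.log_div hb.ne' hspos.ne'] at hlog2
    rw [show Real.log b / Real.log s - 1 = (Real.log b - Real.log s) / Real.log s by
      rw [sub_div, div_self hlogs.ne']]
    exact (div_le_div_iff_of_pos_right hlogs).2 hlog2
end

section
/- Let L ≥ 1, v : ZMod L → ℂ, let H = Matrix.circulant v, and let λ_k = Σ_{m ∈ ZMod L} v(m) · exp(−2π√−1 · (k.val · m.val)/L) for k ∈ ZMod L be its DFT values. Then for every real s > 0 the matrix A = Hᴴ * H + s⁻¹ • (1 : Matrix (ZMod L) (ZMod L) ℂ) is invertible, and its inverse has trace trace(A⁻¹) = Σ_{k ∈ ZMod L} 1/(|λ_k|² + s⁻¹). Consequently the per-symbol MMSE error variance (1/L)·trace(A⁻¹) equals (1/L) Σ_k 1/(|λ_k|² + s⁻¹). (The trace computation underlying the MMSE decision-point SINR, equation (10) of the paper.) 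-/
open Matrix Complex Finset

section Aux

variable (L : ℕ) [NeZero L]

private noncomputable def psiC : ZMod L → ℂ := fun a => ZMod.stdAddChar a

private lemma psiC_zero : psiC L 0 = 1 := by simp [psiC]

private lemma psiC_add (a b : ZMod L) : psiC L (a + b) = psiC L a * psiC L b := by
  simp [psiC, AddChar.map_add_eq_mul]

private lemma psiC_star (a : ZMod L) : star (psiC L a) = psiC L (-a) := by
  have h : psiC L a * psiC L (-a) = 1 := by
    rw [← psiC_add, add_neg_cancel, psiC_zero]
  have hns : Complex.normSq (psiC L a) = 1 := Circle.normSq_coe _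
  have h2 : psiC L a * star (psiC L a) = 1 := by
    rw [show star (psiC L a) = (starRingEnd ℂ) (psiC L a) from rfl, Complex.mul_conj, hns]
    norm_num
  have hne : psiC L a ≠ 0 := fun h0 => by simp [h0] at h
  exact mul_left_cancel₀ hne (h2.trans h.symm)

private lemma psiC_sum {a : ZMod L} (ha : a ≠ 0) : ∑ j : ZMod L, psiC L (j * a) = 0 := by
  have h := AddChar.sum_eq_zero_of_ne_one (ZMod.isPrimitive_stdAddChar L ha)
  simpa [psiC, AddChar.mulShift_apply, mul_comm] using h

private lemma circulant_mul_F (w : ZMod L → ℂ) :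
    Matrix.circulant w * Matrix.of (fun j k : ZMod L => psiC L (j * k)) =
      Matrix.of (fun j k : ZMod L => psiC L (j * k)) *
        Matrix.diagonal (fun k => ∑ m : ZMod L, w m * psiC L (-(m * k))) := by
  ext i k
  rw [Matrix.mul_apply, Matrix.mul_diagonal]
  simp only [Matrix.of_apply, Matrix.circulant_apply]
  rw [Finset.mul_sum]
  refine (Fintype.sum_equiv (Equiv.subLeft i) _ _ fun m => ?_).symm
  simp only [Equiv.subLeft_apply, sub_sub_cancel]
  have h : psiC L (i * k) * psiC L (-(m * k)) = psiC L ((i - m) * k) := by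
    rw [← psiC_add]
    congr 1
    ring
  rw [← h]
  ring

end Aux

/-- Equation (10) of the paper: for a circulant channel matrix `H` with DFT
values `λ_k`, and any SNR `s > 0`, the matrix `A = Hᴴ H + s⁻¹ I` is invertible
and `trace A⁻¹ = ∑_k 1/(|λ_k|² + s⁻¹)`; hence the per-symbol MMSE error
variance `(1/L) trace A⁻¹` equals `(1/L) ∑_k 1/(|λ_k|² + s⁻¹)`. -/
theorem mmse_trace_inverse (L : ℕ) [NeZero L] (v : ZMod L → ℂ) (s : ℝ) (hs : 0 < s) :
    IsUnit ((Matrix.circulant v)ᴴ * Matrix.circulant v +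
        s⁻¹ • (1 : Matrix (ZMod L) (ZMod L) ℂ)) ∧
      Matrix.trace (((Matrix.circulant v)ᴴ * Matrix.circulant v +
          s⁻¹ • (1 : Matrix (ZMod L) (ZMod L) ℂ))⁻¹)
        = ∑ k : ZMod L,
            ((1 / (‖∑ m : ZMod L, v m *
              Complex.exp (-(2 * (Real.pi : ℂ) * Complex.I) *
                ((k.val : ℂ) * (m.val : ℂ)) / (L : ℂ))‖ ^ 2 + s⁻¹) : ℝ) : ℂ) := by
  classical
  set F : Matrix (ZMod L) (ZMod L) ℂ := Matrix.of (fun j k : ZMod L => psiC L (j * k)) with hF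
  set lam : ZMod L → ℂ := fun k => ∑ m : ZMod L, v m * psiC L (-(m * k)) with hlam
  set A : Matrix (ZMod L) (ZMod L) ℂ :=
    (Matrix.circulant v)ᴴ * Matrix.circulant v + s⁻¹ • 1 with hA
  -- λ_k agrees with the statement's exponential sum
  have hlam_eq : ∀ k : ZMod L, lam k = ∑ m : ZMod L, v m *
      Complex.exp (-(2 * (Real.pi : ℂ) * Complex.I) *
        ((k.val : ℂ) * (m.val : ℂ)) / (L : ℂ)) := by
    intro k
    refine Finset.sum_congr rfl fun m _ => ?_
    congr 1
    have h1 : -(m * k) = ((-(k.val * m.val : ℤ) : ℤ) : ZMod L) := by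
      push_cast
      rw [ZMod.natCast_val, ZMod.natCast_val, ZMod.cast_id, ZMod.cast_id]
      ring
    rw [show psiC L (-(m * k)) = ZMod.stdAddChar (-(m * k)) from rfl, h1, ZMod.stdAddChar_coe]
    congr 1
    push_cast
    ring
  -- orthogonality: Fᴴ * F = L • 1
  have horth : Fᴴ * F = (L : ℂ) • 1 := by
    ext i k
    rw [Matrix.mul_apply]
    simp only [Matrix.conjTranspose_apply, hF, Matrix.of_apply]
    have hterm : ∀ j : ZMod L, star (psiC L (j * i)) * psiC L (j * k) = psiC L (j * (k - i)) := by
      intro j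
      rw [psiC_star, ← psiC_add]
      congr 1
      ring
    rw [Finset.sum_congr rfl fun j _ => hterm j]
    by_cases hik : i = k
    · subst hik
      simp [psiC_zero, Matrix.one_apply, Matrix.smul_apply, Finset.card_univ]
    · have hsub : k - i ≠ 0 := sub_ne_zero.mpr (Ne.symm hik)
      rw [psiC_sum L hsub]
      simp [Matrix.one_apply, Matrix.smul_apply, hik]
  have hL : (L : ℂ) ≠ 0 := Nat.cast_ne_zero.mpr (NeZero.ne L)
  set G : Matrix (ZMod L) (ZMod L) ℂ := (L : ℂ)⁻¹ • Fᴴ with hG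
  have hGF : G * F = 1 := by
    rw [hG, Matrix.smul_mul, horth, smul_smul, inv_mul_cancel₀ hL, one_smul]
  have hFG : F * G = 1 := mul_eq_one_comm.mp hGF
  -- eigen-relations
  have hHF : Matrix.circulant v * F = F * Matrix.diagonal lam := circulant_mul_F L v
  have hHstar : (Matrix.circulant v)ᴴ = Matrix.circulant (fun i => star (v (-i))) :=
    Matrix.conjTranspose_circulant v
  have hstarfun : (fun k => ∑ m : ZMod L, star (v (-m)) * psiC L (-(m * k))) =
      fun k => star (lam k) := by
    funext k
    rw [hlam, star_sum]
    refine Fintype.sum_equiv (Equiv.neg (ZMod L)) _ _ fun m => ?_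
    simp only [Equiv.neg_apply, neg_neg, star_mul', psiC_star, neg_mul]
  have hHsF : (Matrix.circulant v)ᴴ * F = F * Matrix.diagonal (fun k => star (lam k)) := by
    rw [hHstar, circulant_mul_F L, hstarfun]
  -- the diagonal values
  set r : ZMod L → ℝ := fun k => Complex.normSq (lam k) + s⁻¹ with hr
  have hrpos : ∀ k, 0 < r k := fun k =>
    add_pos_of_nonneg_of_pos (Complex.normSq_nonneg _) (inv_pos.mpr hs)
  set d : ZMod L → ℂ := fun k => (r k : ℂ) with hd
  have hdne : ∀ k, d k ≠ 0 := fun k => by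
    simp only [hd, ne_eq, Complex.ofReal_eq_zero]
    exact (hrpos k).ne'
  have hsmul : s⁻¹ • (1 : Matrix (ZMod L) (ZMod L) ℂ) =
      Matrix.diagonal (fun _ => ((s⁻¹ : ℝ) : ℂ)) := by
    ext i j
    by_cases h : i = j <;>
      simp [Matrix.smul_apply, Matrix.one_apply, Matrix.diagonal, h, Complex.real_smul]
  have hAF : A * F = F * Matrix.diagonal d := by
    rw [hA, Matrix.add_mul, Matrix.mul_assoc, hHF, ← Matrix.mul_assoc, hHsF, Matrix.mul_assoc,
      Matrix.diagonal_mul_diagonal, hsmul]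
    have hcomm : Matrix.diagonal (fun _ : ZMod L => ((s⁻¹ : ℝ) : ℂ)) * F =
        F * Matrix.diagonal (fun _ : ZMod L => ((s⁻¹ : ℝ) : ℂ)) := by
      ext i j
      rw [Matrix.diagonal_mul, Matrix.mul_diagonal, mul_comm]
    rw [hcomm, ← Matrix.mul_add, Matrix.diagonal_add]
    have hfun : (fun i => star (lam i) * lam i + ((s⁻¹ : ℝ) : ℂ)) = d := by
      funext k
      simp only [hd, hr, Complex.ofReal_add]
      congr 1
      rw [mul_comm]
      exact Complex.mul_conj (lam k)
    rw [hfun]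
  set B : Matrix (ZMod L) (ZMod L) ℂ := F * Matrix.diagonal (fun k => (d k)⁻¹) * G with hB
  have hAB : A * B = 1 := by
    rw [hB, ← Matrix.mul_assoc, ← Matrix.mul_assoc, hAF, Matrix.mul_assoc F,
      Matrix.diagonal_mul_diagonal]
    have hdd : (fun k => d k * (d k)⁻¹) = fun _ : ZMod L => (1 : ℂ) := by
      funext k; exact mul_inv_cancel₀ (hdne k)
    rw [hdd, Matrix.diagonal_one, Matrix.mul_one, hFG]
  have hUnit : IsUnit A := ⟨⟨A, B, hAB, mul_eq_one_comm.mp hAB⟩, rfl⟩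
  have hAinv : A⁻¹ = B := Matrix.inv_eq_right_inv hAB
  refine ⟨hUnit, ?_⟩
  rw [hAinv, hB, Matrix.mul_assoc, Matrix.trace_mul_comm, Matrix.mul_assoc, hGF,
    Matrix.mul_one, Matrix.trace_diagonal]
  refine Finset.sum_congr rfl fun k _ => ?_
  rw [← hlam_eq k, Complex.sq_norm, hd]
  push_cast [hr]
  rw [one_div]
end
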